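/- arXiv:2409.00033 — 3 statements merged into one kernel-verified Lean document; each statement's English description precedes it below -/
import Mathlib

section
/- If S is the union of L translated copies of a reference set S₁ of integers, namely Sₗ = S₁ + (l-1)Δ for l = 1,…,L where Δ = μ + κ, κ = max S₁ - min S₁ is the aperture of S₁, and μ > κ, then the difference coarray of S is the disjoint union of 2L-1 translated copies of the difference coarray of S₁, hence |D(S)| = (2L-1)·|D(S₁)|. -/
/-- Difference coarray of a finite set of integer sensor positions. -/
def diffCoarray (S : Finset ℤ) : Finset ℤ :=
  (S ×ˢ S).image (fun p => p.1 - p.2)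

lemma mem_diffCoarray {S : Finset ℤ} {d : ℤ} :
    d ∈ diffCoarray S ↔ ∃ a ∈ S, ∃ b ∈ S, a - b = d := by
  simp [diffCoarray, Finset.mem_image, Finset.mem_product]
  tauto

theorem typeII_diffCoarray_disjoint_union
    (S₁ : Finset ℤ) (h₁ : S₁.Nonempty) (L : ℕ) (hL : 1 ≤ L) (μ : ℤ)
    (κ : ℤ) (hκ : κ = S₁.max' h₁ - S₁.min' h₁) (hμ : μ > κ)
    (Δ : ℤ) (hΔ : Δ = μ + κ)
    (S : Finset ℤ)
    (hS : S = (Finset.range L).biUnion (fun l => S₁.image (fun x => x + (l : ℤ) * Δ))) :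
    diffCoarray S =
      (Finset.Icc (-(L - 1 : ℤ)) ((L : ℤ) - 1)).biUnion
        (fun k => (diffCoarray S₁).image (fun x => x + k * Δ)) ∧
    (diffCoarray S).card = (2 * L - 1) * (diffCoarray S₁).card := by
  -- bound on elements of diffCoarray S₁
  have hκ0 : 0 ≤ κ := by
    rw [hκ]
    have := S₁.min'_le (S₁.max' h₁) (S₁.max'_mem h₁)
    linarith
  have hbound : ∀ d ∈ diffCoarray S₁, -κ ≤ d ∧ d ≤ κ := by
    intro d hd
    rw [mem_diffCoarray] at hd
    obtain ⟨a, ha, b, hb, hab⟩ := hd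
    have h1 := S₁.le_max' a ha
    have h2 := S₁.min'_le a ha
    have h3 := S₁.le_max' b hb
    have h4 := S₁.min'_le b hb
    constructor <;> [linarith [hκ]; linarith [hκ]] 
  have hΔbig : 2 * κ + 1 ≤ Δ := by omega
  have hEq : diffCoarray S =
      (Finset.Icc (-(L - 1 : ℤ)) ((L : ℤ) - 1)).biUnion
        (fun k => (diffCoarray S₁).image (fun x => x + k * Δ)) := by
    ext d
    simp only [Finset.mem_biUnion, Finset.mem_image, Finset.mem_Icc]
    constructor
    · intro hd
      rw [mem_diffCoarray, hS] at hd
      obtain ⟨a, ha, b, hb, hab⟩ := hd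
      simp only [Finset.mem_biUnion, Finset.mem_image, Finset.mem_range] at ha hb
      obtain ⟨l, hl, x, hx, hxa⟩ := ha
      obtain ⟨l', hl', y, hy, hyb⟩ := hb
      refine ⟨(l : ℤ) - l', ⟨by omega, by omega⟩,
        x - y, mem_diffCoarray.2 ⟨x, hx, y, hy, rfl⟩, ?_⟩
      subst hxa hyb hab
      ring
    · rintro ⟨k, ⟨hk1, hk2⟩, e, he, rfl⟩
      rw [mem_diffCoarray] at he
      obtain ⟨x, hx, y, hy, rfl⟩ := he
      rw [mem_diffCoarray, hS]
      rcases le_or_gt 0 k with hk0 | hk0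
      · refine ⟨x + (k.toNat : ℤ) * Δ, ?_, y, ?_, ?_⟩
        · simp only [Finset.mem_biUnion, Finset.mem_image, Finset.mem_range]
          exact ⟨k.toNat, by omega, x, hx, rfl⟩
        · simp only [Finset.mem_biUnion, Finset.mem_image, Finset.mem_range]
          exact ⟨0, by omega, y, hy, by simp⟩
        · have : (k.toNat : ℤ) = k := Int.toNat_of_nonneg hk0
          rw [this]; ring
      · refine ⟨x, ?_, y + ((-k).toNat : ℤ) * Δ, ?_, ?_⟩
        · simp only [Finset.mem_biUnion, Finset.mem_image, Finset.mem_range]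
          exact ⟨0, by omega, x, hx, by simp⟩
        · simp only [Finset.mem_biUnion, Finset.mem_image, Finset.mem_range]
          exact ⟨(-k).toNat, by omega, y, hy, rfl⟩
        · have : ((-k).toNat : ℤ) = -k := Int.toNat_of_nonneg (by omega)
          rw [this]; ring
  refine ⟨hEq, ?_⟩
  rw [hEq]
  rw [Finset.card_biUnion]
  · have hcard : ∀ k : ℤ, ((diffCoarray S₁).image (fun x => x + k * Δ)).card =
        (diffCoarray S₁).card := by
      intro k
      apply Finset.card_image_of_injective
      intro a b hab
      simpa using hab
    simp only [hcard, Finset.sum_const, smul_eq_mul]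
    have : (Finset.Icc (-(L - 1 : ℤ)) ((L : ℤ) - 1)).card = 2 * L - 1 := by
      rw [Int.card_Icc]
      omega
    rw [this]
  · intro k hk k' hk' hne
    simp only [Finset.disjoint_left, Finset.mem_image]
    rintro z ⟨d, hd, rfl⟩ ⟨d', hd', heq⟩
    obtain ⟨h1, h2⟩ := hbound d hd
    obtain ⟨h3, h4⟩ := hbound d' hd'
    have hkk : (k - k') * Δ = d' - d := by linarith [heq]
    rcases lt_or_gt_of_ne hne with h | h
    · nlinarith [hkk]
    · nlinarith [hkk]
end

section
/- For a type-II array built from subarrays with hole-free difference coarrays and 1 ≤ μ ≤ κ, the bound is achieved with equality: |D(S)| = L(sDoF−1) + 2(L−1)μ + 1, i.e., the difference coarray of the whole array equals the full integer interval [−(L−1)(μ+κ)−κ, (L−1)(μ+κ)+κ]. -/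
theorem typeII_diffCoarray_equality
    (S₁ : Finset ℤ) (h₁ : S₁.Nonempty) (hmin : S₁.min' h₁ = 0)
    (κ : ℤ) (hκ : κ = S₁.max' h₁)
    (hholefree : diffCoarray S₁ = Finset.Icc (-κ) κ)
    (μ : ℤ) (hμ1 : 1 ≤ μ) (hμ2 : μ ≤ κ)
    (L : ℕ) (hL : 1 ≤ L) (Δ : ℤ) (hΔ : Δ = μ + κ)
    (S : Finset ℤ)
    (hS : S = (Finset.range L).biUnion (fun l => S₁.image (fun x => x + (l : ℤ) * Δ)))
    (sDoF : ℤ) (hsDoF : sDoF = 2 * κ + 1) :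
    diffCoarray S = Finset.Icc (-(((L : ℤ) - 1) * Δ + κ)) (((L : ℤ) - 1) * Δ + κ) ∧
    ((diffCoarray S).card : ℤ) = (L : ℤ) * (sDoF - 1) + 2 * ((L : ℤ) - 1) * μ + 1 := by
  have hκ1 : 1 ≤ κ := le_trans hμ1 hμ2
  have hΔpos : 0 < Δ := by omega
  have hL1 : (1 : ℤ) ≤ (L : ℤ) := by exact_mod_cast hL
  set M : ℤ := ((L : ℤ) - 1) * Δ + κ with hM
  have hMnonneg : 0 ≤ M := by
    have : 0 ≤ ((L : ℤ) - 1) * Δ := mul_nonneg (by omega) (le_of_lt hΔpos)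
    omega
  -- membership in S
  have hmemS : ∀ (x : ℤ), x ∈ S₁ → ∀ (l : ℕ), l < L → x + (l : ℤ) * Δ ∈ S := by
    intro x hx l hl
    rw [hS, Finset.mem_biUnion]
    exact ⟨l, Finset.mem_range.mpr hl, Finset.mem_image.mpr ⟨x, hx, rfl⟩⟩
  -- key claim: every nonnegative d ≤ M is in diffCoarray S
  have key : ∀ d : ℤ, 0 ≤ d → d ≤ M → d ∈ diffCoarray S := by
    intro d hd0 hdM
    -- find k with 0 ≤ k ≤ L-1 and -κ ≤ d - k*Δ ≤ κ
    have hkex : ∃ k : ℤ, 0 ≤ k ∧ k ≤ (L : ℤ) - 1 ∧ -κ ≤ d - k * Δ ∧ d - k * Δ ≤ κ := by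
      set q := d / Δ with hq
      set r := d % Δ with hr
      have hdiv : q * Δ + r = d := by rw [mul_comm]; exact Int.mul_ediv_add_emod d Δ
      have hq1 : (q + 1) * Δ = q * Δ + Δ := by ring
      have hr0 : 0 ≤ r := Int.emod_nonneg d (by omega)
      have hrlt : r < Δ := Int.emod_lt_of_pos d hΔpos
      have hq0 : 0 ≤ q := Int.ediv_nonneg hd0 (le_of_lt hΔpos)
      by_cases hrκ : r ≤ κ
      · refine ⟨q, hq0, ?_, by omega, by omega⟩
        -- q ≤ L - 1
        by_contra hcon
        push_neg at hcon
        have hqL : (L : ℤ) ≤ q := by omega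
        have : (L : ℤ) * Δ ≤ q * Δ := mul_le_mul_of_nonneg_right hqL (le_of_lt hΔpos)
        nlinarith
      · push_neg at hrκ
        refine ⟨q + 1, by omega, ?_, by omega, by omega⟩
        by_contra hcon
        push_neg at hcon
        have hqL : (L : ℤ) - 1 ≤ q := by omega
        have : ((L : ℤ) - 1) * Δ ≤ q * Δ := mul_le_mul_of_nonneg_right hqL (le_of_lt hΔpos)
        omega
    obtain ⟨k, hk0, hkL, hlo, hhi⟩ := hkex
    have hdk : d - k * Δ ∈ diffCoarray S₁ := by
      rw [hholefree, Finset.mem_Icc]; exact ⟨hlo, hhi⟩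
    rw [mem_diffCoarray] at hdk
    obtain ⟨x, hx, y, hy, hxy⟩ := hdk
    rw [mem_diffCoarray]
    refine ⟨x + (k.toNat : ℤ) * Δ, hmemS x hx k.toNat (by omega), y + ((0 : ℕ) : ℤ) * Δ,
      hmemS y hy 0 (by omega), ?_⟩
    have : (k.toNat : ℤ) = k := Int.toNat_of_nonneg hk0
    rw [this]
    push_cast
    linarith
  have hIcc : diffCoarray S = Finset.Icc (-M) M := by
    apply Finset.Subset.antisymm
    · intro d hd
      rw [mem_diffCoarray] at hd
      obtain ⟨a, ha, b, hb, hab⟩ := hd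
      rw [hS, Finset.mem_biUnion] at ha hb
      obtain ⟨l, hl, ha⟩ := ha
      obtain ⟨l', hl', hb⟩ := hb
      rw [Finset.mem_image] at ha hb
      obtain ⟨x, hx, rfl⟩ := ha
      obtain ⟨y, hy, rfl⟩ := hb
      have hxyD : x - y ∈ diffCoarray S₁ := by
        rw [mem_diffCoarray]; exact ⟨x, hx, y, hy, rfl⟩
      rw [hholefree, Finset.mem_Icc] at hxyD
      have hlL : (l : ℤ) ≤ (L : ℤ) - 1 := by
        have := Finset.mem_range.mp hl; omega
      have hl'L : (l' : ℤ) ≤ (L : ℤ) - 1 := by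
        have := Finset.mem_range.mp hl'; omega
      have h1 : ((l : ℤ) - (l' : ℤ)) * Δ ≤ ((L : ℤ) - 1) * Δ :=
        mul_le_mul_of_nonneg_right (by omega) (le_of_lt hΔpos)
      have h2 : (-((L : ℤ) - 1)) * Δ ≤ ((l : ℤ) - (l' : ℤ)) * Δ :=
        mul_le_mul_of_nonneg_right (by omega) (le_of_lt hΔpos)
      rw [Finset.mem_Icc]
      constructor <;> nlinarith [hxyD.1, hxyD.2]
    · intro d hd
      rw [Finset.mem_Icc] at hd
      by_cases hd0 : 0 ≤ d
      · exact key d hd0 hd.2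
      · have hnd : -d ∈ diffCoarray S := key (-d) (by omega) (by omega)
        rw [mem_diffCoarray] at hnd ⊢
        obtain ⟨a, ha, b, hb, hab⟩ := hnd
        exact ⟨b, hb, a, ha, by omega⟩
  refine ⟨hIcc, ?_⟩
  rw [hIcc]
  rw [Int.card_Icc]
  have h2M : (-M) ≤ M + 1 := by omega
  have : (M + 1 - -M).toNat = (2 * M + 1).toNat := by ring_nf
  rw [Int.toNat_of_nonneg (by omega : (0:ℤ) ≤ M + 1 - -M)]
  rw [hM, hΔ, hsDoF]
  ring
end

section
/- The two-level nested array with parameters N₁, N₂ ≥ 1, S = {0,1,…,N₁−1} ∪ {n(N₁+1)−1 : n = 1,…,N₂}, has a hole-free difference coarray: D(S) equals the integer interval [−(N₂(N₁+1)−1), N₂(N₁+1)−1], so DoF = 2N₂(N₁+1) − 1. -/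
theorem nested_array_holefree
    (N₁ N₂ : ℕ) (h₁ : 1 ≤ N₁) (h₂ : 1 ≤ N₂)
    (S : Finset ℤ)
    (hS : S = (Finset.range N₁).image (fun n : ℕ => (n : ℤ)) ∪
      (Finset.Icc 1 N₂).image (fun n : ℕ => (n : ℤ) * (N₁ + 1) - 1)) :
    diffCoarray S =
      Finset.Icc (-((N₂ : ℤ) * (N₁ + 1) - 1)) ((N₂ : ℤ) * (N₁ + 1) - 1) ∧
    (diffCoarray S).card = 2 * N₂ * (N₁ + 1) - 1 := by
  have hN₁ : (1:ℤ) ≤ (N₁:ℤ) := by exact_mod_cast h₁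
  have hN₂ : (1:ℤ) ≤ (N₂:ℤ) := by exact_mod_cast h₂
  set M : ℤ := (N₂:ℤ) * (N₁ + 1) - 1 with hM
  have hmem : ∀ x : ℤ, x ∈ S ↔
      (∃ n : ℕ, n < N₁ ∧ x = (n:ℤ)) ∨
      (∃ n : ℕ, 1 ≤ n ∧ n ≤ N₂ ∧ x = (n:ℤ) * (N₁ + 1) - 1) := by
    intro x
    subst hS
    simp only [Finset.mem_union, Finset.mem_image, Finset.mem_range, Finset.mem_Icc]
    constructor
    · rintro (⟨n, hn, rfl⟩ | ⟨n, ⟨h1, h2⟩, rfl⟩)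
      · exact Or.inl ⟨n, hn, rfl⟩
      · exact Or.inr ⟨n, h1, h2, rfl⟩
    · rintro (⟨n, hn, rfl⟩ | ⟨n, h1, h2, rfl⟩)
      · exact Or.inl ⟨n, hn, rfl⟩
      · exact Or.inr ⟨n, ⟨h1, h2⟩, rfl⟩
  have hbound : ∀ x ∈ S, 0 ≤ x ∧ x ≤ M := by
    intro x hx
    rcases (hmem x).1 hx with ⟨n, hn, rfl⟩ | ⟨n, h1, h2, rfl⟩
    · have : (n:ℤ) < N₁ := by exact_mod_cast hn
      constructor
      · positivity
      · nlinarith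
    · have c1 : (1:ℤ) ≤ (n:ℤ) := by exact_mod_cast h1
      have c2 : (n:ℤ) ≤ (N₂:ℤ) := by exact_mod_cast h2
      constructor
      · nlinarith
      · have : (n:ℤ) * (N₁ + 1) ≤ (N₂:ℤ) * (N₁ + 1) := by nlinarith
        linarith
  have cover : ∀ d : ℤ, 0 ≤ d → d ≤ M → ∃ a ∈ S, ∃ b ∈ S, a - b = d := by
    intro d hd0 hdM
    set q : ℤ := d / ((N₁:ℤ) + 1) with hq
    set r : ℤ := d % ((N₁:ℤ) + 1) with hr
    have hpos : (0:ℤ) < (N₁:ℤ) + 1 := by linarith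
    have hdiv : ((N₁:ℤ) + 1) * q + r = d := Int.mul_ediv_add_emod d ((N₁:ℤ)+1)
    have hr0 : 0 ≤ r := Int.emod_nonneg d (by linarith)
    have hr1 : r < (N₁:ℤ) + 1 := Int.emod_lt_of_pos d hpos
    have hq0 : 0 ≤ q := by nlinarith
    have hqN : q + 1 ≤ (N₂:ℤ) := by
      by_contra hcon
      push_neg at hcon
      have : (N₂:ℤ) ≤ q := by linarith
      nlinarith
    -- a = (q+1)*(N₁+1) - 1 ∈ S
    have haS : ((q+1) * ((N₁:ℤ)+1) - 1) ∈ S := by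
      apply (hmem _).2
      right
      refine ⟨q.toNat + 1, by omega, ?_, ?_⟩
      · have : ((q.toNat + 1 : ℕ) : ℤ) ≤ (N₂:ℤ) := by
          rw [Nat.cast_add, Int.toNat_of_nonneg hq0]; exact_mod_cast hqN
        exact_mod_cast this
      · rw [Nat.cast_add, Int.toNat_of_nonneg hq0]
        norm_num
    by_cases hrz : r = 0
    · -- use b = N₁ = 1*(N₁+1)-1
      have hbS : ((N₁:ℤ)) ∈ S := by
        apply (hmem _).2
        right
        exact ⟨1, le_refl 1, h₂, by push_cast; ring⟩
      refine ⟨_, haS, _, hbS, ?_⟩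
      linear_combination hdiv - hrz
    · have hr1' : 1 ≤ r := by omega
      -- b = N₁ - r, a nat < N₁
      have hbS : ((N₁:ℤ) - r) ∈ S := by
        apply (hmem _).2
        left
        refine ⟨((N₁:ℤ) - r).toNat, ?_, ?_⟩
        · have : ((N₁:ℤ) - r).toNat < N₁ := by omega
          exact this
        · rw [Int.toNat_of_nonneg (by omega)]
      refine ⟨_, haS, _, hbS, ?_⟩
      linear_combination hdiv
  have hsymm : ∀ d : ℤ, d ∈ diffCoarray S → -d ∈ diffCoarray S := by
    intro d hd
    simp only [diffCoarray, Finset.mem_image, Finset.mem_product] at hd ⊢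
    obtain ⟨⟨a, b⟩, ⟨ha, hb⟩, hab⟩ := hd
    exact ⟨⟨b, a⟩, ⟨hb, ha⟩, by simp at hab ⊢; linarith⟩
  have hset : diffCoarray S = Finset.Icc (-M) M := by
    ext d
    simp only [Finset.mem_Icc]
    constructor
    · intro hd
      simp only [diffCoarray, Finset.mem_image, Finset.mem_product] at hd
      obtain ⟨⟨a, b⟩, ⟨ha, hb⟩, hab⟩ := hd
      simp only at hab
      obtain ⟨ha0, haM⟩ := hbound a ha
      obtain ⟨hb0, hbM⟩ := hbound b hb
      constructor <;> linarith [hab]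
    · rintro ⟨hl, hr⟩
      rcases le_or_gt 0 d with h | h
      · obtain ⟨a, ha, b, hb, hab⟩ := cover d h hr
        simp only [diffCoarray, Finset.mem_image, Finset.mem_product]
        exact ⟨⟨a, b⟩, ⟨ha, hb⟩, hab⟩
      · have : -d ∈ diffCoarray S := by
          obtain ⟨a, ha, b, hb, hab⟩ := cover (-d) (by linarith) (by linarith)
          simp only [diffCoarray, Finset.mem_image, Finset.mem_product]
          exact ⟨⟨a, b⟩, ⟨ha, hb⟩, hab⟩
        have := hsymm _ this
        simpa using this
  refine ⟨hset, ?_⟩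
  rw [hset, Int.card_Icc]
  have h1 : (1:ℤ) ≤ (N₂:ℤ) * ((N₁:ℤ) + 1) := by nlinarith
  have : (M + 1 - -M) = 2 * (N₂:ℤ) * ((N₁:ℤ) + 1) - 1 := by rw [hM]; ring
  rw [this]
  have : ((2 * N₂ * (N₁ + 1) - 1 : ℕ) : ℤ) = 2 * (N₂:ℤ) * ((N₁:ℤ) + 1) - 1 := by
    have : 1 ≤ 2 * N₂ * (N₁ + 1) := by
      have : 0 < 2 * N₂ * (N₁ + 1) := by positivity
      omega
    push_cast [this]
    ring
  omega
end
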